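/- For ν ≥ −1/2, the function t ↦ t^{−ν} J_{ν+1}(t) is Lipschitz continuous on [0,∞) with Lipschitz constant 1/(2^{ν+1} Γ(ν+2)): for all u, v ≥ 0, |u^{−ν} J_{ν+1}(u) − v^{−ν} J_{ν+1}(v)| ≤ |u−v| / (2^{ν+1} Γ(ν+2)). -/

import Mathlib

open Real MeasureTheory Set intervalIntegral

/-- The Bessel function of the first kind of order `ν`. -/
noncomputable def besselJ (ν x : ℝ) : ℝ :=
  ∑' j : ℕ, (-1 : ℝ) ^ j / ((Nat.factorial j : ℝ) * Real.Gamma (ν + 1 + j)) *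
    (x / 2) ^ (2 * (j : ℝ) + ν)

namespace BesselAux

lemma cont_ws {μ : ℝ} (hμ : 0 ≤ μ) {g : ℝ → ℝ} (hg : Continuous g) (n : ℕ) :
    Continuous fun s : ℝ => s ^ n * (1 - s ^ 2) ^ μ * g s :=
  (((continuous_pow n).mul ((Real.continuous_rpow_const hμ).comp
    (by continuity))).mul hg)

lemma meas_ws (μ : ℝ) {g : ℝ → ℝ} (hg : Continuous g) (n : ℕ) :
    Measurable fun s : ℝ => s ^ n * (1 - s ^ 2) ^ (μ - 1) * g s := by
  have h1 : Measurable fun s : ℝ => (1 - s ^ 2) ^ (μ - 1) := by fun_prop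
  exact ((measurable_id.pow_const n).mul h1).mul hg.measurable

lemma intInt_sing {μ : ℝ} (hμ : 0 < μ) (n : ℕ) {g : ℝ → ℝ} (hg : Continuous g)
    (hgb : ∀ s, |g s| ≤ 1) :
    IntervalIntegrable (fun s => s ^ n * (1 - s ^ 2) ^ (μ - 1) * g s) volume (-1) 1 := by
  rcases le_or_gt 1 μ with h1 | h1
  · exact (cont_ws (by linarith) hg n).intervalIntegrable _ _
  -- dominating function
  have hd1 : IntervalIntegrable (fun s : ℝ => (1 - s) ^ (μ - 1)) volume (-1) 1 := by
    have := (intervalIntegrable_rpow' (a := 0) (b := 2) (by linarith : (-1:ℝ) < μ - 1)).comp_sub_left 1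
    norm_num at this
    exact this.symm
  have hd2 : IntervalIntegrable (fun s : ℝ => (1 + s) ^ (μ - 1)) volume (-1) 1 := by
    have := (intervalIntegrable_rpow' (a := 0) (b := 2) (by linarith : (-1:ℝ) < μ - 1)).comp_add_left 1
    norm_num at this
    exact this
  refine (hd1.add hd2).mono_fun' ((meas_ws μ hg n).aestronglyMeasurable) ?_
  have huIoc : Set.uIoc (-1:ℝ) 1 = Ioc (-1 : ℝ) 1 := uIoc_of_le (by norm_num)
  rw [Filter.EventuallyLE, ae_restrict_iff' measurableSet_uIoc]
  filter_upwards with s hs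
  rw [huIoc] at hs
  have hs1 : -1 < s := hs.1
  have hs2 : s ≤ 1 := hs.2
  have h1s : (0:ℝ) ≤ 1 - s := by linarith
  have h1s' : (0:ℝ) < 1 + s := by linarith
  have habs : |s| ≤ 1 := abs_le.2 ⟨hs1.le, hs2⟩
  have key : (1 - s ^ 2) ^ (μ - 1) ≤ (1 - s) ^ (μ - 1) + (1 + s) ^ (μ - 1) := by
    have hfact : (1 - s ^ 2 : ℝ) = (1 - s) * (1 + s) := by ring
    rw [hfact, Real.mul_rpow h1s h1s'.le]
    rcases le_or_gt 0 s with h0 | h0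
    · have : (1 + s) ^ (μ - 1) ≤ 1 :=
        Real.rpow_le_one_of_one_le_of_nonpos (by linarith) (by linarith)
      have hb : (0:ℝ) ≤ (1 - s) ^ (μ - 1) := Real.rpow_nonneg h1s _
      nlinarith [Real.rpow_nonneg h1s'.le (μ - 1)]
    · have : (1 - s) ^ (μ - 1) ≤ 1 :=
        Real.rpow_le_one_of_one_le_of_nonpos (by linarith) (by linarith)
      have hb : (0:ℝ) ≤ (1 + s) ^ (μ - 1) := Real.rpow_nonneg h1s'.le _
      nlinarith [Real.rpow_nonneg h1s (μ - 1)]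
  have hw : (0:ℝ) ≤ (1 - s ^ 2) ^ (μ - 1) := by
    rcases eq_or_lt_of_le hs2 with heq | hlt
    · rw [heq]; norm_num
      rw [Real.zero_rpow (by intro h; apply absurd h (by intro h'; linarith [sub_eq_zero.mp h']))]
    · exact Real.rpow_nonneg (by nlinarith) _
  have hxw : |s| ^ n * (1 - s ^ 2) ^ (μ - 1) * |g s| ≤ (1 - s ^ 2) ^ (μ - 1) := by
    have e1 : |s| ^ n ≤ 1 := pow_le_one₀ (abs_nonneg s) habs
    have e2 : (0:ℝ) ≤ |s| ^ n := pow_nonneg (abs_nonneg s) n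
    nlinarith [abs_nonneg (g s), hgb s, mul_nonneg e2 hw]
  calc ‖s ^ n * (1 - s ^ 2) ^ (μ - 1) * g s‖
      = |s| ^ n * (1 - s ^ 2) ^ (μ - 1) * |g s| := by
        rw [Real.norm_eq_abs, abs_mul, abs_mul, abs_pow, abs_of_nonneg hw]
    _ ≤ (1 - s ^ 2) ^ (μ - 1) := hxw
    _ ≤ (1 - s) ^ (μ - 1) + (1 + s) ^ (μ - 1) := key

lemma parts {μ : ℝ} (hμ : 0 < μ) (n : ℕ) (t : ℝ) :
    (n + 1 : ℝ) * ∫ s in (-1:ℝ)..1, s ^ n * (1 - s ^ 2) ^ μ * cos (t * s)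
      = 2 * μ * (∫ s in (-1:ℝ)..1, s ^ (n + 2) * (1 - s ^ 2) ^ (μ - 1) * cos (t * s))
        + t * ∫ s in (-1:ℝ)..1, s ^ (n + 1) * (1 - s ^ 2) ^ μ * sin (t * s) := by
  have hcos : Continuous fun s : ℝ => cos (t * s) := by continuity
  have hsin : Continuous fun s : ℝ => sin (t * s) := by continuity
  have hcosb : ∀ s : ℝ, |cos (t * s)| ≤ 1 := fun s => abs_cos_le_one _
  set G : ℝ → ℝ := fun s => s ^ (n + 1) * (1 - s ^ 2) ^ μ * cos (t * s) with hG
  set G' : ℝ → ℝ := fun s =>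
    (n + 1 : ℝ) * (s ^ n * (1 - s ^ 2) ^ μ * cos (t * s))
      - 2 * μ * (s ^ (n + 2) * (1 - s ^ 2) ^ (μ - 1) * cos (t * s))
      - t * (s ^ (n + 1) * (1 - s ^ 2) ^ μ * sin (t * s)) with hG'
  have i1 : IntervalIntegrable (fun s => s ^ n * (1 - s ^ 2) ^ μ * cos (t * s))
      volume (-1) 1 := (cont_ws hμ.le hcos n).intervalIntegrable _ _
  have i2 : IntervalIntegrable (fun s => s ^ (n + 2) * (1 - s ^ 2) ^ (μ - 1) * cos (t * s))
      volume (-1) 1 := intInt_sing hμ (n + 2) hcos hcosb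
  have i3 : IntervalIntegrable (fun s => s ^ (n + 1) * (1 - s ^ 2) ^ μ * sin (t * s))
      volume (-1) 1 := (cont_ws hμ.le hsin (n + 1)).intervalIntegrable _ _
  have hint : IntervalIntegrable G' volume (-1) 1 :=
    ((i1.const_mul _).sub (i2.const_mul _)).sub (i3.const_mul _)
  have hderiv : ∀ x ∈ Ioo (-1:ℝ) 1, HasDerivWithinAt G (G' x) (Ioi x) x := by
    intro x hx
    have hne : (1 - x ^ 2 : ℝ) ≠ 0 := by nlinarith [hx.1, hx.2]
    have d1 : HasDerivAt (fun s : ℝ => s ^ (n + 1)) ((n + 1 : ℝ) * x ^ n) x := by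
      simpa using hasDerivAt_pow (n + 1) x
    have dinner : HasDerivAt (fun s : ℝ => 1 - s ^ 2) (-(2 * x)) x := by
      simpa using ((hasDerivAt_pow 2 x).const_sub 1)
    have d2 : HasDerivAt (fun s : ℝ => (1 - s ^ 2) ^ μ)
        (μ * (1 - x ^ 2) ^ (μ - 1) * -(2 * x)) x := by
      have := (Real.hasDerivAt_rpow_const (x := 1 - x ^ 2) (p := μ) (Or.inl hne)).comp x dinner
      simpa [Function.comp_def, mul_comm, mul_assoc, mul_left_comm] using this
    have d3 : HasDerivAt (fun s : ℝ => cos (t * s)) (-sin (t * x) * t) x := by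
      simpa [Function.comp_def] using (Real.hasDerivAt_cos (t * x)).comp x ((hasDerivAt_id x).const_mul t)
    have := ((d1.mul d2).mul d3)
    refine (HasDerivAt.hasDerivWithinAt ?_)
    refine this.congr_deriv ?_
    simp only [hG', Pi.mul_apply]
    ring
  have hcont : ContinuousOn G (Icc (-1:ℝ) 1) := (cont_ws hμ.le hcos (n + 1)).continuousOn
  have := integral_eq_sub_of_hasDeriv_right_of_le (by norm_num : (-1:ℝ) ≤ 1) hcont hderiv hint
  have hend : G 1 = 0 ∧ G (-1) = 0 := by
    constructor <;> simp [hG, Real.zero_rpow hμ.ne']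
  rw [hend.1, hend.2, sub_zero] at this
  have hsplit : ∫ s in (-1:ℝ)..1, G' s
      = (n + 1 : ℝ) * (∫ s in (-1:ℝ)..1, s ^ n * (1 - s ^ 2) ^ μ * cos (t * s))
        - 2 * μ * (∫ s in (-1:ℝ)..1, s ^ (n + 2) * (1 - s ^ 2) ^ (μ - 1) * cos (t * s))
        - t * ∫ s in (-1:ℝ)..1, s ^ (n + 1) * (1 - s ^ 2) ^ μ * sin (t * s) := by
    rw [integral_sub ((i1.const_mul _).sub (i2.const_mul _)) (i3.const_mul _),
      integral_sub (i1.const_mul _) (i2.const_mul _),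
      intervalIntegral.integral_const_mul, intervalIntegral.integral_const_mul, intervalIntegral.integral_const_mul]
  rw [hsplit] at this
  linarith [this]

lemma cont_w {μ : ℝ} (hμ : 0 ≤ μ) (n : ℕ) :
    Continuous fun s : ℝ => s ^ n * (1 - s ^ 2) ^ μ := by
  have := cont_ws hμ continuous_const (g := fun _ => (1:ℝ)) n
  simpa using this

/-- the moment `∫ s^n (1-s²)^μ ds` over `[-1,1]`. -/
noncomputable def Am (μ : ℝ) (n : ℕ) : ℝ := ∫ s in (-1:ℝ)..1, s ^ n * (1 - s ^ 2) ^ μ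

lemma parts0 {μ : ℝ} (hμ : 0 < μ) (n : ℕ) :
    (n + 1 : ℝ) * Am μ n = 2 * μ * ∫ s in (-1:ℝ)..1, s ^ (n + 2) * (1 - s ^ 2) ^ (μ - 1) := by
  have h := parts hμ n 0
  simp only [zero_mul, Real.cos_zero, mul_one, Real.sin_zero, zero_mul, add_zero] at h
  simpa [Am] using h

lemma Am_rec {μ : ℝ} (hμ : 0 ≤ μ) (n : ℕ) :
    (n + 2 * μ + 3 : ℝ) * Am μ (n + 2) = (n + 1 : ℝ) * Am μ n := by
  have h := parts0 (by linarith : (0:ℝ) < μ + 1) n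
  have hpt : ∀ s : ℝ, s ^ (n + 2) * (1 - s ^ 2) ^ (μ + 1 - 1)
      = s ^ (n + 2) * (1 - s ^ 2) ^ μ := by
    intro s; norm_num
  have hpt2 : ∀ s : ℝ, s ^ n * (1 - s ^ 2) ^ (μ + 1)
      = s ^ n * (1 - s ^ 2) ^ μ - s ^ (n + 2) * (1 - s ^ 2) ^ μ := by
    intro s
    rcases eq_or_ne (1 - s ^ 2 : ℝ) 0 with hz | hz
    · rw [hz, Real.zero_rpow (by linarith : μ + 1 ≠ 0)]
      have hs2 : s ^ 2 = 1 := by linarith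
      rw [show s ^ (n + 2) = s ^ n * s ^ 2 by ring, hs2]
      ring
    · rw [Real.rpow_add_one hz]
      ring
  rw [intervalIntegral.integral_congr (fun s _ => hpt s)] at h
  have hsub : (∫ s in (-1:ℝ)..1, s ^ n * (1 - s ^ 2) ^ (μ + 1))
      = Am μ n - Am μ (n + 2) := by
    rw [intervalIntegral.integral_congr (fun s _ => hpt2 s)]
    exact intervalIntegral.integral_sub ((cont_w hμ n).intervalIntegrable _ _)
      ((cont_w hμ (n + 2)).intervalIntegrable _ _)
  rw [show Am (μ + 1) n = ∫ s in (-1:ℝ)..1, s ^ n * (1 - s ^ 2) ^ (μ + 1) from rfl, hsub] at h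
  have : Am μ (n + 2) = ∫ s in (-1:ℝ)..1, s ^ (n + 2) * (1 - s ^ 2) ^ μ := rfl
  rw [← this] at h
  linarith

lemma Am_pos {μ : ℝ} (hμ : 0 ≤ μ) : 0 < Am μ 0 := by
  apply intervalIntegral.intervalIntegral_pos_of_pos_on
    ((cont_w hμ 0).intervalIntegrable _ _)
  · intro x hx
    have : (0:ℝ) < 1 - x ^ 2 := by nlinarith [hx.1, hx.2]
    simpa using Real.rpow_pos_of_pos this μ
  · norm_num

lemma Gamma_pos_shift {ν : ℝ} (hν : -(1/2) ≤ ν) (k : ℕ) : 0 < Real.Gamma (ν + 2 + k) :=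
  Real.Gamma_pos_of_pos (by have := Nat.cast_nonneg (α := ℝ) k; linarith)

lemma coef {ν : ℝ} (hν : -(1/2) ≤ ν) (k : ℕ) :
    Am (ν + 1/2) (2 * k) * ((4:ℝ) ^ k * (Nat.factorial k : ℝ) * Real.Gamma (ν + 2 + k))
      = Am (ν + 1/2) 0 * Real.Gamma (ν + 2) * ((2 * k).factorial : ℝ) := by
  have hμ : (0:ℝ) ≤ ν + 1/2 := by linarith
  induction k with
  | zero => simp
  | succ k ih =>
    have hrec := Am_rec hμ (2 * k)
    have hpos : (0:ℝ) < ν + 2 + k := by have := Nat.cast_nonneg (α := ℝ) k; linarith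
    have hΓ : Real.Gamma (ν + 2 + (k + 1 : ℕ)) = (ν + 2 + k) * Real.Gamma (ν + 2 + k) := by
      have : (ν + 2 + (k + 1 : ℕ) : ℝ) = (ν + 2 + k) + 1 := by push_cast; ring
      rw [this, Real.Gamma_add_one (by linarith)]
    have hfac : ((2 * k + 2).factorial : ℝ)
        = (2 * (k:ℝ) + 2) * (2 * (k:ℝ) + 1) * ((2 * k).factorial : ℝ) := by
      have h21 : 2 * k + 2 = (2 * k + 1) + 1 := by ring
      rw [h21, Nat.factorial_succ, Nat.factorial_succ]
      push_cast; ring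
    have h2 : 2 * (k + 1) = 2 * k + 2 := by ring
    rw [h2, hΓ, hfac]
    have hkfac : ((k + 1).factorial : ℝ) = (k + 1) * (k.factorial : ℝ) := by
      rw [Nat.factorial_succ]; push_cast; ring
    rw [hkfac]
    have e4 : (4:ℝ) ^ (k + 1) = 4 * 4 ^ k := by ring
    rw [e4]
    push_cast at hrec ih ⊢
    linear_combination (2 * (4:ℝ) ^ k * ((k:ℝ) + 1) * (k.factorial : ℝ)
        * Real.Gamma (ν + 2 + k)) * hrec + (2 * ((k:ℝ) + 1) * (2 * (k:ℝ) + 1)) * ih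

lemma series_rep {μ : ℝ} (hμ : 0 ≤ μ) (t : ℝ) :
    HasSum (fun k : ℕ => (-1) ^ k * t ^ (2 * k) / ((2 * k).factorial : ℝ) * Am μ (2 * k))
      (∫ s in (-1:ℝ)..1, (1 - s ^ 2) ^ μ * cos (t * s)) := by
  set F : ℕ → ℝ → ℝ := fun k s =>
    (-1) ^ k * t ^ (2 * k) / ((2 * k).factorial : ℝ) * (s ^ (2 * k) * (1 - s ^ 2) ^ μ) with hF
  have hmeas : MeasurableSet (Ioc (-1:ℝ) 1) := measurableSet_Ioc
  have hWnonneg : ∀ s ∈ Ioc (-1:ℝ) 1, 0 ≤ (1 - s ^ 2) ^ μ := by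
    intro s hs
    exact Real.rpow_nonneg (by nlinarith [hs.1, hs.2]) μ
  have hFcont : ∀ k : ℕ, Continuous (F k) := fun k =>
    continuous_const.mul (cont_w hμ (2 * k))
  have hF_int : ∀ k : ℕ, Integrable (F k) (volume.restrict (Ioc (-1:ℝ) 1)) := fun k =>
    ((hFcont k).integrableOn_Ioc (μ := volume) (a := -1) (b := 1))
  have hWint : IntegrableOn (fun s : ℝ => (1 - s ^ 2) ^ μ) (Ioc (-1:ℝ) 1) volume := by
    have := (cont_w hμ 0).integrableOn_Ioc (μ := volume) (a := -1) (b := 1)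
    simpa using this
  set B : ℝ := ∫ s in Ioc (-1:ℝ) 1, (1 - s ^ 2) ^ μ with hB
  have hnorm_bound : ∀ k : ℕ, (∫ s in Ioc (-1:ℝ) 1, ‖F k s‖)
      ≤ |t| ^ (2 * k) / ((2 * k).factorial : ℝ) * B := by
    intro k
    have h1 : ∀ s ∈ Ioc (-1:ℝ) 1,
        ‖F k s‖ ≤ |t| ^ (2 * k) / ((2 * k).factorial : ℝ) * (1 - s ^ 2) ^ μ := by
      intro s hs
      have hsabs : |s| ≤ 1 := abs_le.2 ⟨hs.1.le, hs.2⟩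
      have hw := hWnonneg s hs
      have : ‖F k s‖ = |t| ^ (2 * k) / ((2 * k).factorial : ℝ)
          * (|s| ^ (2 * k) * (1 - s ^ 2) ^ μ) := by
        simp only [hF, Real.norm_eq_abs, abs_mul, abs_div, abs_pow, abs_neg, abs_one, one_pow,
          one_mul, Nat.abs_cast, abs_of_nonneg hw]
      rw [this]
      have e1 : |s| ^ (2 * k) * (1 - s ^ 2) ^ μ ≤ (1 - s ^ 2) ^ μ := by
        nlinarith [pow_le_one₀ (abs_nonneg s) hsabs (n := 2 * k),
          pow_nonneg (abs_nonneg s) (2 * k)]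
      have e2 : (0:ℝ) ≤ |t| ^ (2 * k) / ((2 * k).factorial : ℝ) := by positivity
      exact mul_le_mul_of_nonneg_left e1 e2
    calc (∫ s in Ioc (-1:ℝ) 1, ‖F k s‖)
        ≤ ∫ s in Ioc (-1:ℝ) 1, |t| ^ (2 * k) / ((2 * k).factorial : ℝ) * (1 - s ^ 2) ^ μ :=
          setIntegral_mono_on (hF_int k).norm (hWint.const_mul _) hmeas h1
      _ = |t| ^ (2 * k) / ((2 * k).factorial : ℝ) * B := by rw [MeasureTheory.integral_const_mul]
  have hsum0 : Summable fun k : ℕ => |t| ^ (2 * k) / ((2 * k).factorial : ℝ) * B := by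
    have h2 : Summable fun k : ℕ => |t| ^ (2 * k) / ((2 * k).factorial : ℝ) := by
      have := (Real.summable_pow_div_factorial |t|).comp_injective
        (fun a b h => by dsimp only at h; omega : Function.Injective fun k : ℕ => 2 * k)
      exact this
    exact h2.mul_right B
  have hF_sum : Summable fun k : ℕ => ∫ s in Ioc (-1:ℝ) 1, ‖F k s‖ :=
    Summable.of_nonneg_of_le (fun k => integral_nonneg fun s => norm_nonneg _)
      hnorm_bound hsum0
  have key := hasSum_integral_of_summable_integral_norm hF_int hF_sum
  have hpt : ∀ s : ℝ, (∑' k : ℕ, F k s) = (1 - s ^ 2) ^ μ * cos (t * s) := by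
    intro s
    have e : ∀ k : ℕ, F k s
        = ((-1) ^ k * (t * s) ^ (2 * k) / ((2 * k).factorial : ℝ)) * (1 - s ^ 2) ^ μ := by
      intro k
      simp only [hF, mul_pow]
      ring
    rw [tsum_congr e, tsum_mul_right, ← Real.cos_eq_tsum (t * s)]
    ring
  have hint_eq : (∫ s in Ioc (-1:ℝ) 1, ∑' k : ℕ, F k s)
      = ∫ s in (-1:ℝ)..1, (1 - s ^ 2) ^ μ * cos (t * s) := by
    rw [intervalIntegral.integral_of_le (by norm_num : (-1:ℝ) ≤ 1)]
    exact integral_congr_ae (Filter.Eventually.of_forall hpt)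
  rw [hint_eq] at key
  suffices hfun : (fun k : ℕ => (-1) ^ k * t ^ (2 * k) / ((2 * k).factorial : ℝ) * Am μ (2 * k))
      = fun x => ∫ a in Ioc (-1:ℝ) 1, F x a by rw [hfun]; exact key
  funext k
  rw [show Am μ (2 * k) = ∫ s in Ioc (-1:ℝ) 1, s ^ (2 * k) * (1 - s ^ 2) ^ μ by
    rw [Am, intervalIntegral.integral_of_le (by norm_num : (-1:ℝ) ≤ 1)]]
  rw [← MeasureTheory.integral_const_mul]

lemma cont_w0 {μ : ℝ} (hμ : 0 ≤ μ) : Continuous fun s : ℝ => (1 - s ^ 2) ^ μ := by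
  have := cont_w hμ 0
  simpa using this

lemma hasDeriv_main {μ : ℝ} (hμ : 0 ≤ μ) (t : ℝ) :
    HasDerivAt (fun x : ℝ => ∫ s in (-1:ℝ)..1, (1 - s ^ 2) ^ μ * (x * cos (x * s)))
      (∫ s in (-1:ℝ)..1, (1 - s ^ 2) ^ μ * (cos (t * s) - t * s * sin (t * s))) t := by
  have hcw := cont_w0 hμ
  have key := intervalIntegral.hasDerivAt_integral_of_dominated_loc_of_deriv_le
    (F := fun (x : ℝ) (s : ℝ) => (1 - s ^ 2) ^ μ * (x * cos (x * s)))
    (F' := fun (x : ℝ) (s : ℝ) => (1 - s ^ 2) ^ μ * (cos (x * s) - x * s * sin (x * s)))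
    (x₀ := t) (a := -1) (b := 1) (μ := volume)
    (bound := fun s => (1 - s ^ 2) ^ μ * (1 + (|t| + 1)))
    (s := Metric.ball t 1) (Metric.ball_mem_nhds t one_pos)
    (Filter.Eventually.of_forall fun x =>
      ((hcw.mul (continuous_const.mul (by continuity))).aestronglyMeasurable).restrict)
    ((hcw.mul (continuous_const.mul (by continuity))).intervalIntegrable _ _)
    (((hcw.mul (by continuity)).aestronglyMeasurable).restrict)
    ?_ ((hcw.mul continuous_const).intervalIntegrable _ _) ?_
  · exact key.2
  · apply Filter.Eventually.of_forall
    intro s hs x hx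
    have hsIoc : s ∈ Ioc (-1:ℝ) 1 := by rwa [uIoc_of_le (by norm_num : (-1:ℝ) ≤ 1)] at hs
    have hw : (0:ℝ) ≤ (1 - s ^ 2) ^ μ := Real.rpow_nonneg (by nlinarith [hsIoc.1, hsIoc.2]) μ
    have hsabs : |s| ≤ 1 := abs_le.2 ⟨hsIoc.1.le, hsIoc.2⟩
    have hxabs : |x| ≤ |t| + 1 := by
      have := mem_ball_iff_norm.1 hx
      have h2 := abs_sub_abs_le_abs_sub x t
      rw [Real.norm_eq_abs] at this
      linarith
    rw [Real.norm_eq_abs, abs_mul, abs_of_nonneg hw]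
    have : |cos (x * s) - x * s * sin (x * s)| ≤ 1 + (|t| + 1) := by
      have h1 := abs_cos_le_one (x * s)
      have h2 := abs_sin_le_one (x * s)
      have h3 : |x * s * sin (x * s)| ≤ (|t| + 1) := by
        rw [abs_mul, abs_mul]
        have : |x| * |s| ≤ (|t| + 1) * 1 :=
          mul_le_mul hxabs hsabs (abs_nonneg s) (by positivity)
        nlinarith [abs_nonneg (sin (x * s)), abs_nonneg x, abs_nonneg s]
      calc |cos (x * s) - x * s * sin (x * s)|
          ≤ |cos (x * s)| + |x * s * sin (x * s)| := abs_sub _ _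
        _ ≤ 1 + (|t| + 1) := add_le_add h1 h3
    exact mul_le_mul_of_nonneg_left this hw
  · apply Filter.Eventually.of_forall
    intro s _ x _
    have d1 : HasDerivAt (fun y : ℝ => y * cos (y * s))
        (cos (x * s) - x * s * sin (x * s)) x := by
      have dm : HasDerivAt (fun y : ℝ => y * s) s x := by
        simpa using (hasDerivAt_id x).mul_const s
      have dc : HasDerivAt (fun y : ℝ => cos (y * s)) (-sin (x * s) * s) x :=
        by simpa [Function.comp_def] using (Real.hasDerivAt_cos (x * s)).comp x dm
      have := (hasDerivAt_id x).mul dc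
      refine this.congr_deriv ?_
      simp only [id_eq]
      ring
    exact d1.const_mul _

lemma deriv_bound {μ : ℝ} (hμ : 0 ≤ μ) (t : ℝ) :
    |∫ s in (-1:ℝ)..1, (1 - s ^ 2) ^ μ * (cos (t * s) - t * s * sin (t * s))| ≤ Am μ 0 := by
  rcases eq_or_lt_of_le hμ with hz | hpos
  · -- μ = 0
    subst hz
    have hptw : ∀ s : ℝ, (1 - s ^ 2) ^ (0:ℝ) * (cos (t * s) - t * s * sin (t * s))
        = cos (t * s) - t * s * sin (t * s) := by
      intro s; rw [Real.rpow_zero]; ring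
    rw [intervalIntegral.integral_congr (fun s _ => hptw s)]
    have hftc : (∫ s in (-1:ℝ)..1, (cos (t * s) - t * s * sin (t * s)))
        = (1:ℝ) * cos (t * 1) - (-1:ℝ) * cos (t * (-1)) := by
      have := intervalIntegral.integral_eq_sub_of_hasDerivAt
        (f := fun s : ℝ => s * cos (t * s))
        (f' := fun s : ℝ => cos (t * s) - t * s * sin (t * s)) (a := -1) (b := 1)
        (fun x _ => by
          have dm : HasDerivAt (fun y : ℝ => t * y) t x := by
            simpa using (hasDerivAt_id x).const_mul t
          have dc : HasDerivAt (fun y : ℝ => cos (t * y)) (-sin (t * x) * t) x :=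
            (Real.hasDerivAt_cos (t * x)).comp x dm
          have h2 := (hasDerivAt_id x).mul dc
          refine h2.congr_deriv ?_
          simp only [id_eq]
          ring)
        (((by continuity : Continuous fun s : ℝ =>
          cos (t * s) - t * s * sin (t * s))).intervalIntegrable _ _)
      simpa using this
    rw [hftc]
    have hAm : Am 0 0 = 2 := by
      have hptw2 : ∀ s : ℝ, s ^ 0 * (1 - s ^ 2) ^ (0:ℝ) = 1 := by
        intro s; rw [Real.rpow_zero]; ring
      rw [Am, intervalIntegral.integral_congr (fun s _ => hptw2 s)]
      norm_num
    rw [hAm]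
    rw [show (1:ℝ) * cos (t * 1) - -1 * cos (t * -1) = 2 * cos t by
      rw [mul_one, show t * (-1:ℝ) = -t by ring, Real.cos_neg]; ring, abs_mul, abs_two]
    linarith [abs_cos_le_one t, abs_nonneg (cos t)]
  · -- μ > 0
    have hcos : Continuous fun s : ℝ => cos (t * s) := by continuity
    have hsin : Continuous fun s : ℝ => sin (t * s) := by continuity
    have hcosb : ∀ s : ℝ, |cos (t * s)| ≤ 1 := fun s => abs_cos_le_one _
    have h1b : ∀ s : ℝ, |(1:ℝ)| ≤ 1 := fun s => by norm_num
    have h := parts hpos 0 t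
    norm_num at h
    have i1 : IntervalIntegrable (fun s : ℝ => (1 - s ^ 2) ^ μ * cos (t * s))
        volume (-1) 1 := ((cont_w0 hμ).mul hcos).intervalIntegrable _ _
    have i2 : IntervalIntegrable (fun s : ℝ => s * (1 - s ^ 2) ^ μ * sin (t * s))
        volume (-1) 1 :=
      ((continuous_id.mul (cont_w0 hμ)).mul hsin).intervalIntegrable _ _
    have hsplit : (∫ s in (-1:ℝ)..1, (1 - s ^ 2) ^ μ * (cos (t * s) - t * s * sin (t * s)))
        = (∫ s in (-1:ℝ)..1, (1 - s ^ 2) ^ μ * cos (t * s))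
          - t * ∫ s in (-1:ℝ)..1, s * (1 - s ^ 2) ^ μ * sin (t * s) := by
      rw [← intervalIntegral.integral_const_mul, ← intervalIntegral.integral_sub i1
        (i2.const_mul t)]
      apply intervalIntegral.integral_congr
      intro s _
      ring
    rw [hsplit]
    -- now bound 2μ ∫ s² (1-s²)^(μ-1) cos
    have hInt1 : IntervalIntegrable (fun s : ℝ => s ^ 2 * (1 - s ^ 2) ^ (μ - 1) * cos (t * s))
        volume (-1) 1 := intInt_sing hpos 2 hcos hcosb
    have hInt2 : IntervalIntegrable (fun s : ℝ => s ^ 2 * (1 - s ^ 2) ^ (μ - 1))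
        volume (-1) 1 := by
      have := intInt_sing hpos 2 continuous_const h1b
      simpa using this
    have habs1 : |∫ s in (-1:ℝ)..1, s ^ 2 * (1 - s ^ 2) ^ (μ - 1) * cos (t * s)|
        ≤ ∫ s in (-1:ℝ)..1, s ^ 2 * (1 - s ^ 2) ^ (μ - 1) := by
      have h1 := intervalIntegral.abs_integral_le_integral_abs
        (f := fun s : ℝ => s ^ 2 * (1 - s ^ 2) ^ (μ - 1) * cos (t * s))
        (a := -1) (b := 1) (μ := volume) (by norm_num)
      refine h1.trans ?_
      apply intervalIntegral.integral_mono_on (by norm_num) hInt1.abs hInt2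
      intro s hs
      have hw : (0:ℝ) ≤ (1 - s ^ 2) ^ (μ - 1) :=
        Real.rpow_nonneg (by nlinarith [hs.1, hs.2]) _
      rw [abs_mul, abs_mul, abs_pow, sq_abs, abs_of_nonneg hw]
      nlinarith [hcosb s, abs_nonneg (cos (t * s)), mul_nonneg (sq_nonneg s) hw]
    have hval : 2 * μ * ∫ s in (-1:ℝ)..1, s ^ 2 * (1 - s ^ 2) ^ (μ - 1) = Am μ 0 := by
      have h0 := parts0 hpos 0
      norm_num at h0
      linarith [h0]
    have hfin : (∫ s in (-1:ℝ)..1, (1 - s ^ 2) ^ μ * cos (t * s))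
        - t * ∫ s in (-1:ℝ)..1, s * (1 - s ^ 2) ^ μ * sin (t * s)
        = 2 * μ * ∫ s in (-1:ℝ)..1, s ^ 2 * (1 - s ^ 2) ^ (μ - 1) * cos (t * s) := by
      linarith [h]
    rw [hfin, abs_mul, abs_of_nonneg (by positivity : (0:ℝ) ≤ 2 * μ)]
    calc 2 * μ * |∫ s in (-1:ℝ)..1, s ^ 2 * (1 - s ^ 2) ^ (μ - 1) * cos (t * s)|
        ≤ 2 * μ * ∫ s in (-1:ℝ)..1, s ^ 2 * (1 - s ^ 2) ^ (μ - 1) :=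
          mul_le_mul_of_nonneg_left habs1 (by positivity)
      _ = Am μ 0 := hval

end BesselAux

open BesselAux

/-- For `ν ≥ −1/2`, the function `t ↦ t^{−ν} J_{ν+1}(t)` is Lipschitz on `[0,∞)` with
Lipschitz constant `1/(2^{ν+1} Γ(ν+2))`. -/
theorem besselJ_lipschitz (ν : ℝ) (hν : -(1/2) ≤ ν) :
    ∀ u v : ℝ, 0 ≤ u → 0 ≤ v →
      |u ^ (-ν) * besselJ (ν + 1) u - v ^ (-ν) * besselJ (ν + 1) v|
        ≤ |u - v| / (2 ^ (ν + 1) * Real.Gamma (ν + 2)) := by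
  set μ : ℝ := ν + 1/2 with hμdef
  have hμ : (0:ℝ) ≤ μ := by simp only [hμdef]; linarith
  have hΓpos : 0 < Real.Gamma (ν + 2) := by
    have := Gamma_pos_shift hν 0
    simpa using this
  have h2pos : (0:ℝ) < 2 ^ (ν + 1) := Real.rpow_pos_of_pos two_pos _
  have hApos := Am_pos hμ
  set C : ℝ := (2 ^ (ν + 1) * Real.Gamma (ν + 2) * Am μ 0)⁻¹ with hC
  have hCpos : 0 < C := by positivity
  set L : ℝ := (2 ^ (ν + 1) * Real.Gamma (ν + 2))⁻¹ with hL
  have hCL : C * Am μ 0 = L := by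
    rw [hC, hL]
    field_simp
  set G : ℝ → ℝ := fun x =>
    C * ∫ s in (-1:ℝ)..1, (1 - s ^ 2) ^ μ * (x * cos (x * s)) with hG
  -- derivative and bound
  have hDeriv : ∀ t : ℝ, HasDerivAt G
      (C * ∫ s in (-1:ℝ)..1, (1 - s ^ 2) ^ μ * (cos (t * s) - t * s * sin (t * s))) t :=
    fun t => (hasDeriv_main hμ t).const_mul C
  have hBound : ∀ t : ℝ,
      ‖C * ∫ s in (-1:ℝ)..1, (1 - s ^ 2) ^ μ * (cos (t * s) - t * s * sin (t * s))‖ ≤ L := by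
    intro t
    rw [Real.norm_eq_abs, abs_mul, abs_of_pos hCpos, ← hCL]
    exact mul_le_mul_of_nonneg_left (deriv_bound hμ t) hCpos.le
  -- Lipschitz estimate for G
  have hLip : ∀ u v : ℝ, |G u - G v| ≤ L * |u - v| := by
    intro u v
    have := Convex.norm_image_sub_le_of_norm_hasDerivWithin_le
      (f := G)
      (f' := fun t => C * ∫ s in (-1:ℝ)..1, (1 - s ^ 2) ^ μ * (cos (t * s) - t * s * sin (t * s)))
      (s := Set.univ)
      (fun x _ => (hDeriv x).hasDerivWithinAt) (fun x _ => hBound x) convex_univ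
      (Set.mem_univ v) (Set.mem_univ u)
    simpa [Real.norm_eq_abs] using this
  -- identification with besselJ
  have hEq : ∀ t : ℝ, 0 ≤ t → t ^ (-ν) * besselJ (ν + 1) t = G t := by
    intro t ht
    rcases eq_or_lt_of_le ht with hz | htpos
    · -- t = 0
      subst hz
      have hb0 : besselJ (ν + 1) 0 = 0 := by
        rw [besselJ]
        have : ∀ j : ℕ, (-1 : ℝ) ^ j / ((Nat.factorial j : ℝ) * Real.Gamma (ν + 1 + 1 + j)) *
            ((0:ℝ) / 2) ^ (2 * (j : ℝ) + (ν + 1)) = 0 := by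
          intro j
          rw [zero_div, Real.zero_rpow (by
            have := Nat.cast_nonneg (α := ℝ) j
            intro hcon
            nlinarith)]
          ring
        rw [tsum_congr this]
        exact tsum_zero
      rw [hb0, mul_zero, hG]
      simp
    · -- t > 0
      have hIc := (series_rep hμ t).tsum_eq
      have hGt : G t = C * t * ∑' k : ℕ,
          (-1) ^ k * t ^ (2 * k) / ((2 * k).factorial : ℝ) * Am μ (2 * k) := by
        rw [hG]
        beta_reduce
        rw [hIc]
        have : (∫ s in (-1:ℝ)..1, (1 - s ^ 2) ^ μ * (t * cos (t * s)))
            = t * ∫ s in (-1:ℝ)..1, (1 - s ^ 2) ^ μ * cos (t * s) := by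
          rw [← intervalIntegral.integral_const_mul]
          apply intervalIntegral.integral_congr
          intro s _
          ring
        rw [this]
        ring
      rw [hGt, besselJ, ← tsum_mul_left, ← tsum_mul_left]
      apply tsum_congr
      intro j
      have hΓj := Gamma_pos_shift hν j
      have hfacj : ((Nat.factorial j : ℝ)) ≠ 0 := by
        exact_mod_cast Nat.factorial_ne_zero j
      have hfac2j : (((2 * j).factorial : ℝ)) ≠ 0 := by
        exact_mod_cast Nat.factorial_ne_zero (2 * j)
      have e1 : ((t:ℝ) / 2) ^ (2 * (j : ℝ) + (ν + 1))
          = t ^ (2 * (j : ℝ) + (ν + 1)) / 2 ^ (2 * (j : ℝ) + (ν + 1)) :=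
        Real.div_rpow ht (by norm_num) _
      have e2 : t ^ (-ν) * t ^ (2 * (j : ℝ) + (ν + 1)) = t ^ (2 * j + 1) := by
        rw [← Real.rpow_add htpos]
        rw [show -ν + (2 * (j:ℝ) + (ν + 1)) = ((2 * j + 1 : ℕ) : ℝ) by push_cast; ring]
        exact Real.rpow_natCast t (2 * j + 1)
      have e3 : (2:ℝ) ^ (2 * (j : ℝ) + (ν + 1)) = 4 ^ j * 2 ^ (ν + 1) := by
        rw [Real.rpow_add two_pos, show (2 * (j:ℝ)) = ((2 * j : ℕ) : ℝ) by push_cast; ring,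
          Real.rpow_natCast]
        congr 1
        rw [pow_mul]
        norm_num
      rw [show ν + 1 + 1 + (j:ℝ) = ν + 2 + (j:ℝ) by ring]
      rw [e1, e3]
      rw [show t ^ (-ν) * ((-1 : ℝ) ^ j / ((Nat.factorial j : ℝ) * Real.Gamma (ν + 2 + j)) *
          (t ^ (2 * (j : ℝ) + (ν + 1)) / (4 ^ j * 2 ^ (ν + 1))))
        = (-1 : ℝ) ^ j / ((Nat.factorial j : ℝ) * Real.Gamma (ν + 2 + j)) *
          ((t ^ (-ν) * t ^ (2 * (j : ℝ) + (ν + 1))) / (4 ^ j * 2 ^ (ν + 1))) by ring, e2]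
      have hcoef := coef hν j
      rw [hC]
      have h4j : ((4:ℝ) ^ j) ≠ 0 := by positivity
      field_simp
      rw [← hμdef] at hcoef
      linear_combination (-t ^ (2 * j + 1)) * hcoef
  -- final assembly
  intro u v hu hv
  rw [hEq u hu, hEq v hv]
  have := hLip u v
  calc |G u - G v| ≤ L * |u - v| := hLip u v
    _ = |u - v| / (2 ^ (ν + 1) * Real.Gamma (ν + 2)) := by
        rw [hL, div_eq_mul_inv]
        ring
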